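/- Let F be a special N-diagram of R-modules with totalisation map D = D(F). For all subsets A ⊆ B ⊆ N and every element z ∈ N ∖ B, the two component maps (D ∘ D)_{B,A} and (D ∘ D)_{B ⊔ {z}, A ⊔ {z}} agree up to sign: there exists ε ∈ {1, −1} with (D ∘ D)_{B ⊔ {z}, A ⊔ {z}} = ε · (D ∘ D)_{B,A}. -/

import Mathlib

open DirectSum

/-- Total incidence number. -/
noncomputable def incNum {α : Type} [LinearOrder α] (B A : Finset α) : ℤ :=
  if A ⊆ B then
    (-1 : ℤ) ^ ((B ×ˢ (B \ A)).filter (fun p => p.1 < p.2)).card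
  else 0

/-- An `N`-diagram (`N = {1,…,n}`): for each `A ⊆ N` a ℤ-graded `R`-module
`F A`, and for each pair `A, B` a graded module homomorphism
`H_{B,A} : F A → F B` of degree `#A − #B + 1`, encoded as maps
`F A i →ₗ[R] F B j` for all `i, j` with `i + (#A − #B + 1) = j`.
(For `A ⊄ B` the map `H_{B,A}` is irrelevant: it is multiplied by the
incidence number `[B:A] = 0` in the totalisation.) -/
structure NDiagram (R : Type) [Ring R] (n : ℕ) : Type 1 where
  F : Finset (Fin n) → ℤ → Type
  [acg : ∀ A i, AddCommGroup (F A i)]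
  [mod : ∀ A i, Module R (F A i)]
  H : ∀ (A B : Finset (Fin n)) (i j : ℤ),
      i + ((A.card : ℤ) - B.card + 1) = j → (F A i →ₗ[R] F B j)

attribute [instance] NDiagram.acg NDiagram.mod

variable {R : Type} [Ring R] {n : ℕ}

/-- The totalisation `Tot(F)^ℓ = ⊕_{A ⊆ N} F(A)^{ℓ−#A}`. -/
noncomputable abbrev NDiagram.Tot (d : NDiagram R n) (ℓ : ℤ) : Type :=
  ⨁ (A : Finset (Fin n)), d.F A (ℓ - A.card)

/-- The degree-1 map `D(F)` on the totalisation, with matrix entries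
`D_{B,A} = (−1)^{#A·#B}[B:A]·H_{B,A}`. -/
noncomputable def NDiagram.D (d : NDiagram R n) (ℓ ℓ' : ℤ) (h : ℓ + 1 = ℓ') :
    d.Tot ℓ →ₗ[R] d.Tot ℓ' :=
  DirectSum.toModule R _ _ fun A =>
    ∑ B : Finset (Fin n),
      (((-1 : ℤ) ^ (A.card * B.card) * incNum B A) •
        ((DirectSum.lof R (Finset (Fin n)) (fun B => d.F B (ℓ' - B.card)) B).comp
          (d.H A B (ℓ - A.card) (ℓ' - B.card) (by omega))))

/-- A homotopy commutative `N`-cube: an `N`-diagram whose totalisation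
differential squares to zero. -/
def NDiagram.IsCube (d : NDiagram R n) : Prop :=
  ∀ (ℓ ℓ' ℓ'' : ℤ) (h : ℓ + 1 = ℓ') (h' : ℓ' + 1 = ℓ''),
    (d.D ℓ' ℓ'' h').comp (d.D ℓ ℓ' h) = 0

/-- A special `N`-diagram: the graded module `C` is the same for all vertices,
and the structure map for `A ⊆ B` depends only on `S = B ∖ A`; it is a graded
map of degree `1 − #S`. The case `S = ∅` is the differential `d`, the case
`S = {k}` gives the maps `f_k`, and `#S ≥ 2` gives the (higher) homotopies
`H_S`. -/
structure SpecialDiagram (R : Type) [Ring R] (n : ℕ) : Type 1 where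
  C : ℤ → Type
  [acg : ∀ i, AddCommGroup (C i)]
  [mod : ∀ i, Module R (C i)]
  Hh : ∀ (S : Finset (Fin n)) (i j : ℤ), i + (1 - (S.card : ℤ)) = j → (C i →ₗ[R] C j)

attribute [instance] SpecialDiagram.acg SpecialDiagram.mod

/-- The `N`-diagram determined by a special `N`-diagram:
`F(A) = C` for all `A`, and `H_{B,A} = H_{B∖A}` for `A ⊆ B` (and `0` otherwise). -/
noncomputable def SpecialDiagram.toNDiagram (d : SpecialDiagram R n) : NDiagram R n where
  F := fun _ => d.C
  H := fun A B i j h =>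
    if hAB : A ⊆ B then
      d.Hh (B \ A) i j (by
        have hc : (B \ A).card = B.card - A.card := by
          rw [Finset.card_sdiff, Finset.inter_eq_left.mpr hAB]
        have hle := Finset.card_le_card hAB
        omega)
    else 0

/-- The `(B,A)`-component of `D(F) ∘ D(F)` for (the `N`-diagram associated with)
a special `N`-diagram:
`(D∘D)_{B,A} = Σ_{A ⊆ S ⊆ B} (−1)^{#B·#S}(−1)^{#S·#A}[B:S][S:A]·H_{B,S}∘H_{S,A}`
(terms with `S ⊉ A` or `S ⊄ B` vanish since then `[B:S][S:A] = 0`). -/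
noncomputable def SpecialDiagram.DDcomp (d : SpecialDiagram R n) (B A : Finset (Fin n))
    (i j : ℤ) (h : i + ((A.card : ℤ) - B.card + 2) = j) : d.C i →ₗ[R] d.C j :=
  ∑ S : Finset (Fin n),
    ((-1 : ℤ) ^ (B.card * S.card) * (-1 : ℤ) ^ (S.card * A.card)
        * incNum B S * incNum S A) •
      ((d.toNDiagram.H S B (i + ((A.card : ℤ) - S.card + 1)) j (by omega)).comp
        (d.toNDiagram.H A S i (i + ((A.card : ℤ) - S.card + 1)) rfl))

private lemma negpow_mod (p : ℕ) : ((-1 : ℤ)) ^ p = (-1) ^ (p % 2) := by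
  conv_lhs => rw [← Nat.div_add_mod p 2]
  rw [pow_add, pow_mul]
  norm_num

private lemma negpow_congr {p q : ℕ} (h : p % 2 = q % 2) : ((-1 : ℤ)) ^ p = (-1) ^ q := by
  rw [negpow_mod p, negpow_mod q, h]

private lemma insert_sdiff_insert_eq {α : Type} [LinearOrder α] {z : α} {B S : Finset α}
    (hzB : z ∉ B) : insert z B \ insert z S = B \ S := by
  ext x
  simp only [Finset.mem_sdiff, Finset.mem_insert, not_or]
  constructor
  · rintro ⟨h1 | h1, h2, h3⟩
    · exact absurd h1 h2
    · exact ⟨h1, h3⟩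
  · rintro ⟨h1, h3⟩
    exact ⟨Or.inr h1, fun e => hzB (e ▸ h1), h3⟩

private lemma kappa_insert {α : Type} [LinearOrder α] {z : α} {B S : Finset α}
    (hzB : z ∉ B) :
    (((insert z B) ×ˢ (B \ S)).filter (fun p => p.1 < p.2)).card
      = ((B ×ˢ (B \ S)).filter (fun p => p.1 < p.2)).card
        + ((B \ S).filter (fun x => z < x)).card := by
  have hprod : (insert z B) ×ˢ (B \ S) = (B \ S).image (fun x => (z, x)) ∪ B ×ˢ (B \ S) := by
    ext p
    simp only [Finset.mem_product, Finset.mem_insert, Finset.mem_union, Finset.mem_image]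
    constructor
    · rintro ⟨h1 | h1, h2⟩
      · exact Or.inl ⟨p.2, h2, by rw [← h1]⟩
      · exact Or.inr ⟨h1, h2⟩
    · rintro (⟨x, hx, he⟩ | ⟨h1, h2⟩)
      · cases he; exact ⟨Or.inl rfl, hx⟩
      · exact ⟨Or.inr h1, h2⟩
  have hinj : Function.Injective (fun x : α => (z, x)) := fun a b hab => congrArg Prod.snd hab
  have hdisj : Disjoint ((B \ S).image (fun x => (z, x))) (B ×ˢ (B \ S)) := by
    rw [Finset.disjoint_left]
    rintro p hp1 hp2
    obtain ⟨x, _, he⟩ := Finset.mem_image.mp hp1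
    have h1 : p.1 = z := by rw [← he]
    have h2 : p.1 ∈ B := (Finset.mem_product.mp hp2).1
    exact hzB (h1 ▸ h2)
  rw [hprod, Finset.filter_union, Finset.card_union_of_disjoint (Finset.disjoint_filter_filter hdisj),
    Finset.filter_image, Finset.card_image_of_injective _ hinj, add_comm]

private lemma incNum_insert {α : Type} [LinearOrder α] {z : α} {B S : Finset α}
    (hzB : z ∉ B) (hzS : z ∉ S) :
    incNum (insert z B) (insert z S)
      = (-1 : ℤ) ^ ((B \ S).filter (fun x => z < x)).card * incNum B S := by
  by_cases hSB : S ⊆ B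
  · have h1 : insert z S ⊆ insert z B := Finset.insert_subset_insert z hSB
    rw [incNum, if_pos h1, incNum, if_pos hSB, insert_sdiff_insert_eq hzB,
      kappa_insert hzB, pow_add, mul_comm]
  · have h1 : ¬ insert z S ⊆ insert z B := by
      intro hsub
      apply hSB
      intro x hx
      rcases Finset.mem_insert.mp (hsub (Finset.mem_insert_of_mem hx)) with e | hB
      · exact absurd (e ▸ hx) hzS
      · exact hB
    rw [incNum, if_neg h1, incNum, if_neg hSB, mul_zero]

private lemma filter_card_split {α : Type} [DecidableEq α] {A S B : Finset α}
    (hAS : A ⊆ S) (hSB : S ⊆ B) (p : α → Prop) [DecidablePred p] :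
    ((B \ A).filter p).card = ((B \ S).filter p).card + ((S \ A).filter p).card := by
  rw [← Finset.sdiff_union_sdiff_cancel hSB hAS, Finset.filter_union,
    Finset.card_union_of_disjoint]
  exact Finset.disjoint_filter_filter
    (Finset.sdiff_disjoint.mono_right (Finset.sdiff_subset))

private lemma incNum_insertF {n : ℕ} {z : Fin n} {B S : Finset (Fin n)} (hzB : z ∉ B) (hzS : z ∉ S) :
    incNum (insert z B) (insert z S)
      = (-1 : ℤ) ^ ((B \ S).filter (fun x => z < x)).card * incNum B S := by
  have h := incNum_insert hzB hzS
  convert h using 2 <;> congr!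

private lemma insert_sdiff_insert_eqF {n : ℕ} {z : Fin n} {B S : Finset (Fin n)}
    (hzB : z ∉ B) : insert z B \ insert z S = B \ S := by
  ext x
  simp only [Finset.mem_sdiff, Finset.mem_insert, not_or]
  constructor
  · rintro ⟨h1 | h1, h2, h3⟩
    · exact absurd h1 h2
    · exact ⟨h1, h3⟩
  · rintro ⟨h1, h3⟩
    exact ⟨Or.inr h1, fun e => hzB (e ▸ h1), h3⟩

private lemma filter_card_splitF {n : ℕ} {A S B : Finset (Fin n)}
    (hAS : A ⊆ S) (hSB : S ⊆ B) (p : Fin n → Prop) [DecidablePred p] :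
    ((B \ A).filter p).card = ((B \ S).filter p).card + ((S \ A).filter p).card := by
  rw [← Finset.sdiff_union_sdiff_cancel hSB hAS, Finset.filter_union,
    Finset.card_union_of_disjoint]
  exact Finset.disjoint_filter_filter
    (Finset.sdiff_disjoint.mono_right (Finset.sdiff_subset))

private lemma comp_congr (d : SpecialDiagram R n) {S1 S2 S1' S2' : Finset (Fin n)}
    (hS1 : S1 = S1') (hS2 : S2 = S2') {i k k' j : ℤ} (hk : k = k')
    (p1 : k + (1 - (S2.card : ℤ)) = j) (p2 : i + (1 - (S1.card : ℤ)) = k)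
    (p1' : k' + (1 - (S2'.card : ℤ)) = j) (p2' : i + (1 - (S1'.card : ℤ)) = k') :
    (d.Hh S2 k j p1).comp (d.Hh S1 i k p2)
      = (d.Hh S2' k' j p1').comp (d.Hh S1' i k' p2') := by
  subst hS1; subst hS2; subst hk; rfl

private lemma toNDiagram_H_eq (d : SpecialDiagram R n) {A B : Finset (Fin n)} (hAB : A ⊆ B)
    (i j : ℤ) (h : i + ((A.card : ℤ) - B.card + 1) = j)
    (h' : i + (1 - ((B \ A).card : ℤ)) = j) :
    d.toNDiagram.H A B i j h = d.Hh (B \ A) i j h' := by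
  simp only [SpecialDiagram.toNDiagram]
  rw [dif_pos hAB]

private lemma sum_reduce_insert {M : Type} [AddCommMonoid M] {n : ℕ} {z : Fin n}
    {f g : Finset (Fin n) → M}
    (hf0 : ∀ S, z ∉ S → f S = 0)
    (hg0 : ∀ S, z ∈ S → g S = 0)
    (hfg : ∀ T, z ∉ T → f (insert z T) = g T) :
    ∑ S : Finset (Fin n), f S = ∑ S : Finset (Fin n), g S := by
  classical
  rw [← Finset.sum_filter_add_sum_filter_not Finset.univ (fun S => z ∈ S) f,
      ← Finset.sum_filter_add_sum_filter_not Finset.univ (fun S => z ∈ S) g]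
  have h1 : ∑ S ∈ Finset.univ.filter (fun S => ¬ z ∈ S), f S = 0 :=
    Finset.sum_eq_zero fun S hS => hf0 S (Finset.mem_filter.mp hS).2
  have h2 : ∑ S ∈ Finset.univ.filter (fun S => z ∈ S), g S = 0 :=
    Finset.sum_eq_zero fun S hS => hg0 S (Finset.mem_filter.mp hS).2
  rw [h1, h2, add_zero, zero_add]
  refine Finset.sum_nbij' (fun S => S.erase z) (fun T => insert z T) ?_ ?_ ?_ ?_ ?_
  · intro S hS
    simp
  · intro T hT
    simp
  · intro S hS
    exact Finset.insert_erase (Finset.mem_filter.mp hS).2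
  · intro T hT
    exact Finset.erase_insert (by simpa using (Finset.mem_filter.mp hT).2)
  · intro S hS
    have hzS := (Finset.mem_filter.mp hS).2
    have := hfg (S.erase z) (Finset.notMem_erase z S)
    rwa [Finset.insert_erase hzS] at this

private lemma term_key (d : SpecialDiagram R n) {A B T : Finset (Fin n)} (hAB : A ⊆ B)
    {z : Fin n} (hz : z ∉ B) (hzT : z ∉ T) (i j : ℤ)
    (pf : (i + (((insert z A).card : ℤ) - ((insert z T).card : ℤ) + 1))
        + (((insert z T).card : ℤ) - ((insert z B).card : ℤ) + 1) = j)
    (qf : (i + ((A.card : ℤ) - (T.card : ℤ) + 1))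
        + ((T.card : ℤ) - (B.card : ℤ) + 1) = j) :
    ((-1 : ℤ) ^ ((insert z B).card * (insert z T).card)
        * (-1 : ℤ) ^ ((insert z T).card * (insert z A).card)
        * incNum (insert z B) (insert z T) * incNum (insert z T) (insert z A)) •
      ((d.toNDiagram.H (insert z T) (insert z B)
          (i + (((insert z A).card : ℤ) - ((insert z T).card : ℤ) + 1)) j pf).comp
        (d.toNDiagram.H (insert z A) (insert z T) i
          (i + (((insert z A).card : ℤ) - ((insert z T).card : ℤ) + 1)) rfl))
    = ((-1 : ℤ) ^ (A.card + B.card + ((B \ A).filter (fun x => z < x)).card)) •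
      (((-1 : ℤ) ^ (B.card * T.card) * (-1 : ℤ) ^ (T.card * A.card)
          * incNum B T * incNum T A) •
        ((d.toNDiagram.H T B (i + ((A.card : ℤ) - (T.card : ℤ) + 1)) j qf).comp
          (d.toNDiagram.H A T i (i + ((A.card : ℤ) - (T.card : ℤ) + 1)) rfl))) := by
  have hzA : z ∉ A := fun hm => hz (hAB hm)
  have hcA := Finset.card_insert_of_notMem hzA
  have hcB := Finset.card_insert_of_notMem hz
  have hcT := Finset.card_insert_of_notMem hzT
  rw [incNum_insertF hz hzT, incNum_insertF hzT hzA]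
  by_cases hsub : A ⊆ T ∧ T ⊆ B
  · obtain ⟨h1, h2⟩ := hsub
    have hA' : insert z A ⊆ insert z T := Finset.insert_subset_insert z h1
    have hT' : insert z T ⊆ insert z B := Finset.insert_subset_insert z h2
    have c1 := Finset.card_sdiff_of_subset h1
    have c2 := Finset.card_sdiff_of_subset h2
    have c1' := Finset.card_sdiff_of_subset hA'
    have c2' := Finset.card_sdiff_of_subset hT'
    have l1 := Finset.card_le_card h1
    have l2 := Finset.card_le_card h2
    have l1' := Finset.card_le_card hA'
    have l2' := Finset.card_le_card hT'
    rw [toNDiagram_H_eq d hT' _ _ pf (by omega),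
        toNDiagram_H_eq d hA' _ _ rfl (by omega),
        toNDiagram_H_eq d h2 _ _ qf (by omega),
        toNDiagram_H_eq d h1 _ _ rfl (by omega)]
    erw [comp_congr d (insert_sdiff_insert_eqF hzT) (insert_sdiff_insert_eqF hz)
        (show (i + (((insert z A).card : ℤ) - ((insert z T).card : ℤ) + 1))
            = i + ((A.card : ℤ) - (T.card : ℤ) + 1) by
          rw [hcA, hcT]; push_cast; ring)
        _ _ (by omega) (by omega)]
    rw [smul_smul]
    congr 1
    simp only [incNum, if_pos h1, if_pos h2]
    rw [filter_card_splitF h1 h2, hcA, hcB, hcT]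
    simp only [← pow_add]
    apply negpow_congr
    have e1 : (B.card + 1) * (T.card + 1) = B.card * T.card + (B.card + T.card + 1) := by ring
    have e2 : (T.card + 1) * (A.card + 1) = T.card * A.card + (T.card + A.card + 1) := by ring
    rw [e1, e2]
    generalize B.card * T.card = m1
    generalize T.card * A.card = m2
    omega
  · rcases not_and_or.mp hsub with hn | hn
    · simp only [incNum, if_neg hn, mul_zero, zero_smul, smul_zero]; rfl
    · simp only [incNum, if_neg hn, mul_zero, zero_mul, zero_smul, smul_zero]; rfl
/-- Let `F` be a special `N`-diagram with totalisation map
`D = D(F)`. For all subsets `A ⊆ B ⊆ N` and every `z ∈ N ∖ B`, the component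
maps `(D ∘ D)_{B,A}` and `(D ∘ D)_{B ⊔ {z}, A ⊔ {z}}` agree up to sign: there
is `ε ∈ {1, −1}` with `(D ∘ D)_{B ⊔ {z}, A ⊔ {z}} = ε · (D ∘ D)_{B,A}`. -/
theorem DDcomp_insert_eq_sign_smul (d : SpecialDiagram R n)
    (A B : Finset (Fin n)) (hAB : A ⊆ B) (z : Fin n) (hz : z ∉ B) :
    ∃ ε : ℤ, (ε = 1 ∨ ε = -1) ∧
      ∀ (i j : ℤ) (h : i + ((A.card : ℤ) - B.card + 2) = j)
        (h' : i + (((insert z A).card : ℤ) - ((insert z B).card : ℤ) + 2) = j),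
        d.DDcomp (insert z B) (insert z A) i j h' = ε • d.DDcomp B A i j h := by
  refine ⟨(-1 : ℤ) ^ (A.card + B.card + ((B \ A).filter (fun x => z < x)).card), ?_, ?_⟩
  · rcases Nat.even_or_odd (A.card + B.card + ((B \ A).filter (fun x => z < x)).card) with he | ho
    · exact Or.inl he.neg_one_pow
    · exact Or.inr ho.neg_one_pow
  · intro i j h h'
    unfold SpecialDiagram.DDcomp
    refine Eq.trans ?_ Finset.smul_sum.symm
    apply sum_reduce_insert
    · intro S hzS
      have hn : ¬ insert z A ⊆ S := fun hsub => hzS (hsub (Finset.mem_insert_self z A))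
      simp only [incNum, if_neg hn, mul_zero, zero_smul]
      rfl
    · intro S hzS
      have hn : ¬ S ⊆ B := fun hs => hz (hs hzS)
      simp only [incNum, if_neg hn, mul_zero, zero_mul, zero_smul, smul_zero]
      exact LinearMap.ext fun _ => smul_zero (M := ℤ) (A := d.C j)
        ((-1 : ℤ) ^ (A.card + B.card + ((B \ A).filter (fun x => z < x)).card))
    · intro T hzT
      exact term_key d hAB hz hzT i j _ _
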